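/- Let 1 ≤ p < ∞ and let (x_n) ⊂ ℓ_p be Buo-Cauchy with coordinatewise limit x ∈ ℝ^ℕ. Then x ∈ ℓ_p. -/

import Mathlib

open Filter

/-- `z` decreases to `0` within the function lattice `S` (pointwise order):
all terms lie in `S`, the sequence is antitone, nonnegative, and `0` is its
greatest lower bound within `S`. -/
def DecToZeroIn {X : Type*} (S : Set (X → ℝ)) (z : ℕ → X → ℝ) : Prop :=
  (∀ m, z m ∈ S) ∧ Antitone z ∧ (∀ m, (0 : X → ℝ) ≤ z m) ∧
    ∀ w ∈ S, (∀ m, w ≤ z m) → w ≤ 0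

/-- Order convergence of `f` to `g` within the function lattice `S`. -/
def OrderConvIn {X : Type*} (S : Set (X → ℝ)) (f : ℕ → X → ℝ) (g : X → ℝ) : Prop :=
  ∃ z : ℕ → X → ℝ, DecToZeroIn S z ∧
    ∀ m : ℕ, ∃ N : ℕ, ∀ n ≥ N, ∀ x, |f n x - g x| ≤ z m x

/-- Bourgain–uo Cauchy within `S`: along every strictly increasing sequence of
indices the differences order-converge to `0` in `S`. -/
def BuoCauchyIn {X : Type*} (S : Set (X → ℝ)) (f : ℕ → X → ℝ) : Prop :=
  ∀ φ : ℕ → ℕ, StrictMono φ → OrderConvIn S (fun k => f (φ (k + 1)) - f (φ k)) 0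

/-- The lattice `c₀` of null real sequences. -/
def memC0 : Set (ℕ → ℝ) := {x | Tendsto x atTop (nhds 0)}

/-- The lattice `ℓ∞(X)` of bounded real functions on `X`. -/
def memLinf {X : Type*} : Set (X → ℝ) := {f | ∃ M : ℝ, ∀ x, |f x| ≤ M}

lemma three_rpow {p : ℝ} (hp : 1 ≤ p) {a b c : ℝ} (ha : 0 ≤ a) (hb : 0 ≤ b) (hc : 0 ≤ c) :
    (a + b + c) ^ p ≤ 3 ^ (p - 1) * (a ^ p + b ^ p + c ^ p) := by
  have h := Real.rpow_arith_mean_le_arith_mean_rpow (Finset.univ : Finset (Fin 3))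
      (fun _ => (3:ℝ)⁻¹) ![a, b, c] (fun i _ => by norm_num)
      (by simp) (fun i _ => by fin_cases i <;> simpa) hp
  rw [Fin.sum_univ_three, Fin.sum_univ_three] at h
  simp only [Matrix.cons_val_zero, Matrix.cons_val_one, Matrix.head_cons,
    Matrix.cons_val_two, Matrix.tail_cons] at h
  have h1 : (3:ℝ)⁻¹ * a + 3⁻¹ * b + 3⁻¹ * c = (a + b + c) / 3 := by ring
  have h2 : ((a + b + c) / 3 : ℝ) ^ p = (a + b + c) ^ p / 3 ^ p := by
    rw [Real.div_rpow (by linarith) (by norm_num)]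
  rw [h1, h2] at h
  have h3p : (0:ℝ) < 3 ^ p := Real.rpow_pos_of_pos (by norm_num) p
  have h4 : (3:ℝ) ^ (p - 1) = 3 ^ p / 3 := by
    rw [Real.rpow_sub (by norm_num), Real.rpow_one]
  rw [h4]
  rw [div_le_iff₀ h3p] at h
  calc (a + b + c) ^ p ≤ (3⁻¹ * a ^ p + 3⁻¹ * b ^ p + 3⁻¹ * c ^ p) * 3 ^ p := h
    _ = 3 ^ p / 3 * (a ^ p + b ^ p + c ^ p) := by ring

lemma step_exists (p : ℝ) (hp : 1 ≤ p) (x : ℕ → ℕ → ℝ)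
    (hmem : ∀ n, Summable (fun k => |x n k| ^ p)) (g : ℕ → ℝ)
    (hlim : ∀ k, Tendsto (fun n => x n k) atTop (nhds (g k)))
    (hg : ¬ Summable (fun k => |g k| ^ p)) (n0 a0 : ℕ) :
    ∃ m b, n0 < m ∧ a0 < b ∧
      1 ≤ ∑ j ∈ Finset.Ico a0 b, |x m j - x n0 j| ^ p := by
  have hp0 : 0 < p := lt_of_lt_of_le one_pos hp
  have hgpos : ∀ k, 0 ≤ |g k| ^ p := fun k => Real.rpow_nonneg (abs_nonneg _) p
  have h3pos : (0:ℝ) < 3 ^ (p - 1) := Real.rpow_pos_of_pos (by norm_num) _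
  set T : ℝ := ∑' j, |x n0 j| ^ p with hT
  set C : ℝ := 3 ^ (p - 1) * (2 + T) with hC
  -- divergence of partial sums of |g|^p
  have htop : Tendsto (fun N => ∑ j ∈ Finset.range N, |g j| ^ p) atTop atTop := by
    by_contra h
    exact hg ((summable_iff_not_tendsto_nat_atTop_of_nonneg hgpos).2 h)
  obtain ⟨b, hb1, hb2⟩ := ((htop.eventually_ge_atTop
      (C + ∑ j ∈ Finset.range a0, |g j| ^ p)).and (eventually_ge_atTop (a0 + 1))).exists
  have hab : a0 < b := hb2
  have hblock : C ≤ ∑ j ∈ Finset.Ico a0 b, |g j| ^ p := by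
    have := Finset.sum_Ico_eq_sub (fun j => |g j| ^ p) hab.le
    rw [this]; linarith
  -- choose m with small error on block and m > n0
  have hF : Tendsto (fun m => ∑ j ∈ Finset.Ico a0 b, |x m j - g j| ^ p) atTop (nhds 0) := by
    have : Tendsto (fun m => ∑ j ∈ Finset.Ico a0 b, |x m j - g j| ^ p) atTop
        (nhds (∑ j ∈ Finset.Ico a0 b, (0:ℝ))) := by
      apply tendsto_finset_sum
      intro j _
      have h1 : Tendsto (fun m => |x m j - g j|) atTop (nhds 0) := by
        have := (hlim j).sub_const (g j)
        simpa using this.abs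
      have hcont : ContinuousAt (fun t : ℝ => t ^ p) 0 :=
        Real.continuousAt_rpow_const 0 p (Or.inr hp0.le)
      have := hcont.tendsto.comp h1
      simpa [Function.comp_def, Real.zero_rpow hp0.ne'] using this
    simpa using this
  obtain ⟨m, hm1, hm2⟩ := ((hF.eventually_le_const one_pos).and
      (eventually_gt_atTop n0)).exists
  refine ⟨m, b, hm2, hab, ?_⟩
  -- pointwise estimate
  have hpt : ∀ j, |g j| ^ p ≤
      3 ^ (p - 1) * (|x m j - x n0 j| ^ p + |x n0 j| ^ p + |x m j - g j| ^ p) := by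
    intro j
    have htri : |g j| ≤ |x m j - x n0 j| + |x n0 j| + |x m j - g j| := by
      have : g j = (x m j - x n0 j) + x n0 j + (g j - x m j) := by ring
      calc |g j| = |(x m j - x n0 j) + x n0 j + (g j - x m j)| := by rw [← this]
        _ ≤ |x m j - x n0 j| + |x n0 j| + |g j - x m j| := by
            exact (abs_add_le _ _).trans (by gcongr; exact abs_add_le _ _)
        _ = |x m j - x n0 j| + |x n0 j| + |x m j - g j| := by rw [abs_sub_comm (g j) (x m j)]
    calc |g j| ^ p ≤ (|x m j - x n0 j| + |x n0 j| + |x m j - g j|) ^ p :=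
          Real.rpow_le_rpow (abs_nonneg _) htri hp0.le
      _ ≤ 3 ^ (p - 1) * (|x m j - x n0 j| ^ p + |x n0 j| ^ p + |x m j - g j| ^ p) :=
          three_rpow hp (abs_nonneg _) (abs_nonneg _) (abs_nonneg _)
  have hsum : C ≤ 3 ^ (p - 1) *
      ((∑ j ∈ Finset.Ico a0 b, |x m j - x n0 j| ^ p) + T + 1) := by
    have h1 : ∑ j ∈ Finset.Ico a0 b, |g j| ^ p ≤
        ∑ j ∈ Finset.Ico a0 b, 3 ^ (p - 1) *
          (|x m j - x n0 j| ^ p + |x n0 j| ^ p + |x m j - g j| ^ p) :=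
      Finset.sum_le_sum fun j _ => hpt j
    have h2 : ∑ j ∈ Finset.Ico a0 b, |x n0 j| ^ p ≤ T :=
      Summable.sum_le_tsum _ (fun j _ => Real.rpow_nonneg (abs_nonneg _) p) (hmem n0)
    rw [← Finset.mul_sum] at h1
    have := hblock.trans h1
    rw [Finset.sum_add_distrib, Finset.sum_add_distrib] at this
    nlinarith [this, h2, hm1, h3pos]
  rw [hC] at hsum
  have := (mul_le_mul_iff_right₀ h3pos).1 hsum
  linarith

/-- The coordinatewise limit of a Buo-Cauchy sequence in `ℓ_p` (`1 ≤ p < ∞`)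
lies in `ℓ_p`. -/
theorem pointwise_limit_in_lp (p : ℝ) (hp : 1 ≤ p) (x : ℕ → ℕ → ℝ)
    (hmem : ∀ n, Summable (fun k => |x n k| ^ p))
    (hc : BuoCauchyIn {u : ℕ → ℝ | Summable (fun k => |u k| ^ p)} x)
    (g : ℕ → ℝ) (hlim : ∀ k, Tendsto (fun n => x n k) atTop (nhds (g k))) :
    Summable (fun k => |g k| ^ p) := by
  by_contra hg
  have hp0 : 0 < p := lt_of_lt_of_le one_pos hp
  -- construct the sequence of indices and blocks
  have H : ∀ pr : ℕ × ℕ, ∃ qr : ℕ × ℕ, pr.1 < qr.1 ∧ pr.2 < qr.2 ∧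
      1 ≤ ∑ j ∈ Finset.Ico pr.2 qr.2, |x qr.1 j - x pr.1 j| ^ p := by
    intro pr
    obtain ⟨m, b, h1, h2, h3⟩ := step_exists p hp x hmem g hlim hg pr.1 pr.2
    exact ⟨(m, b), h1, h2, h3⟩
  choose F hF1 hF2 hF3 using H
  set f : ℕ → ℕ × ℕ := fun k => F^[k] (0, 0) with hf
  have hfs : ∀ k, f (k + 1) = F (f k) := fun k => Function.iterate_succ_apply' F k _
  set n : ℕ → ℕ := fun k => (f k).1 with hn
  set a : ℕ → ℕ := fun k => (f k).2 with ha
  have hnmono : StrictMono n := strictMono_nat_of_lt_succ fun k => by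
    simpa [hn, hfs k] using hF1 (f k)
  have hamono : StrictMono a := strictMono_nat_of_lt_succ fun k => by
    simpa [ha, hfs k] using hF2 (f k)
  have hblk : ∀ k, 1 ≤ ∑ j ∈ Finset.Ico (a k) (a (k + 1)),
      |x (n (k + 1)) j - x (n k) j| ^ p := fun k => by
    have := hF3 (f k); rw [← hfs k] at this; exact this
  -- apply Buo-Cauchy along n
  obtain ⟨z, ⟨hzS, -, hznn, -⟩, hz⟩ := hc n hnmono
  obtain ⟨N, hN⟩ := hz 0
  have hz0 : Summable (fun k => |z 0 k| ^ p) := hzS 0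
  -- each block (for k ≥ N) contributes ≥ 1 to sums of |z 0|^p
  have hblkz : ∀ k, N ≤ k → 1 ≤ ∑ j ∈ Finset.Ico (a k) (a (k + 1)), |z 0 j| ^ p := by
    intro k hk
    refine (hblk k).trans (Finset.sum_le_sum fun j _ => ?_)
    have hd := hN k hk j
    simp only [Pi.sub_apply, Pi.zero_apply, sub_zero] at hd
    have : |x (n (k + 1)) j - x (n k) j| ≤ |z 0 j| := hd.trans (le_abs_self _)
    exact Real.rpow_le_rpow (abs_nonneg _) this hp0.le
  -- partial sums of |z 0|^p over consecutive blocks grow linearly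
  have hKsum : ∀ K : ℕ, (K : ℝ) ≤ ∑ j ∈ Finset.Ico (a N) (a (N + K)), |z 0 j| ^ p := by
    intro K
    induction K with
    | zero => simp
    | succ K ih =>
      have hsplit := Finset.sum_Ico_consecutive (fun j => |z 0 j| ^ p)
        (hamono.monotone (Nat.le_add_right N K)) (hamono.monotone (Nat.le_succ (N + K)))
      have : (N + (K + 1)) = (N + K) + 1 := by ring
      rw [this, ← hsplit]
      push_cast
      have := hblkz (N + K) (Nat.le_add_right N K)
      linarith
  have hbound : ∀ K : ℕ, (K : ℝ) ≤ ∑' j, |z 0 j| ^ p := fun K =>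
    (hKsum K).trans (Summable.sum_le_tsum _ (fun j _ => Real.rpow_nonneg (abs_nonneg _) p) hz0)
  obtain ⟨K, hK⟩ := exists_nat_gt (∑' j, |z 0 j| ^ p)
  exact absurd (hbound K) (not_le.2 hK)
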